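/- arXiv:0903.2810 — 6 statements merged into one kernel-verified Lean document; each statement's English description precedes it below -/
import Mathlib

section
/- Let G be a finite abelian group, H ≤ G a subgroup, and A ⊆ ℤ nonempty. Then D_A(G) ≥ D_A(H) + D_A(G/H) − 1. -/
/-- Weighted sum of a multiset of (weight, element) pairs. -/
def wSum {G : Type*} [AddCommGroup G] (T : Multiset (ℤ × G)) : G :=
  (T.map fun p => p.1 • p.2).sum

/-- The weighted Davenport constant `D_A(G)`. -/
noncomputable def DW (A : Set ℤ) (G : Type*) [AddCommGroup G] : ℕ :=
  sInf {ℓ | ∀ S : Multiset G, S.card = ℓ →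
    ∃ T : Multiset (ℤ × G), T ≠ 0 ∧ T.map Prod.snd ≤ S ∧ (∀ p ∈ T, p.1 ∈ A) ∧ wSum T = 0}

section Aux

variable {K : Type*} [AddCommGroup K] {A : Set ℤ}

/-- A multiset `S` is good if it has a nonempty zero-weighted-sum subsequence. -/
def IsGood (A : Set ℤ) {K : Type*} [AddCommGroup K] (S : Multiset K) : Prop :=
  ∃ T : Multiset (ℤ × K), T ≠ 0 ∧ T.map Prod.snd ≤ S ∧ (∀ p ∈ T, p.1 ∈ A) ∧ wSum T = 0

lemma DW_eq (A : Set ℤ) (K : Type*) [AddCommGroup K] :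
    DW A K = sInf {ℓ | ∀ S : Multiset K, S.card = ℓ → IsGood A S} := rfl

lemma IsGood.mono {S S' : Multiset K} (h : IsGood A S) (hle : S ≤ S') : IsGood A S' := by
  obtain ⟨T, h0, hT, hTA, hw⟩ := h
  exact ⟨T, h0, hT.trans hle, hTA, hw⟩

lemma mem_DWSet_of_le {ℓ m : ℕ} (h : ℓ ∈ {ℓ | ∀ S : Multiset K, S.card = ℓ → IsGood A S})
    (hlm : ℓ ≤ m) : m ∈ {ℓ | ∀ S : Multiset K, S.card = ℓ → IsGood A S} := by
  intro S hS
  set l := S.toList with hl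
  have hlen : l.length = m := by simpa [hl] using hS
  have hsub : ((l.take ℓ : List K) : Multiset K) ≤ S := by
    rw [← S.coe_toList]
    exact Multiset.coe_le.mpr (List.take_sublist _ _).subperm
  have hcard : ((l.take ℓ : List K) : Multiset K).card = ℓ := by
    simp [List.length_take, hlen, Nat.min_eq_left hlm]
  exact (h _ hcard).mono hsub

lemma card_mem_DWSet [Finite K] (hA : A.Nonempty) :
    Nat.card K ∈ {ℓ | ∀ S : Multiset K, S.card = ℓ → IsGood A S} := by
  classical
  obtain ⟨w, hw⟩ := hA
  cases nonempty_fintype K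
  intro S hS
  set n := Nat.card K with hn
  set l := S.toList with hl
  have hlen : l.length = n := by simpa [hl] using hS
  have key : ∀ i j : Fin (n + 1), (i : ℕ) < (j : ℕ) →
      w • (l.take (i : ℕ)).sum = w • (l.take (j : ℕ)).sum → IsGood A S := by
    intro i j hlt heq
    set b := (l.drop (i : ℕ)).take ((j : ℕ) - (i : ℕ)) with hb
    have hjle : (j : ℕ) ≤ l.length := by
      rw [hlen]; omega
    have hblen : b.length = (j : ℕ) - (i : ℕ) := by
      rw [hb, List.length_take, List.length_drop]; omega
    have htake : l.take (j : ℕ) = l.take (i : ℕ) ++ b := by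
      rw [hb, ← List.take_add]
      congr 1
      omega
    have hbne : b ≠ [] := by
      intro h
      rw [h] at hblen
      simp at hblen
      omega
    have hsum : (l.take (j : ℕ)).sum = (l.take (i : ℕ)).sum + b.sum := by
      rw [htake, List.sum_append]
    have hzero : w • b.sum = 0 := by
      rw [hsum, smul_add] at heq
      exact (left_eq_add.mp heq)
    refine ⟨(b : Multiset K).map (fun g => (w, g)), ?_, ?_, ?_, ?_⟩
    · simp only [ne_eq, Multiset.map_eq_zero, Multiset.coe_eq_zero]
      exact hbne
    · have hble : (b : Multiset K) ≤ S := by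
        rw [← S.coe_toList]
        exact Multiset.coe_le.mpr
          (((List.take_sublist _ _).trans (List.drop_sublist _ _)).subperm)
      simpa [Multiset.map_map, Function.comp] using hble
    · intro p hp
      simp only [Multiset.mem_map] at hp
      obtain ⟨g, _, rfl⟩ := hp
      exact hw
    · rw [wSum, Multiset.map_map]
      have hrw : ((b : Multiset K).map ((fun p : ℤ × K => p.1 • p.2) ∘ fun g => (w, g)))
          = (b : Multiset K).map (fun x => w • x) := rfl
      rw [hrw, ← Multiset.smul_sum, Multiset.sum_coe]
      exact hzero
  have hcard : Fintype.card K < Fintype.card (Fin (n + 1)) := by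
    simp [hn, Nat.card_eq_fintype_card]
  obtain ⟨i, j, hne, hij⟩ := Fintype.exists_ne_map_eq_of_card_lt
    (fun k : Fin (n + 1) => w • (l.take (k : ℕ)).sum) hcard
  rcases lt_or_gt_of_ne (fun h : (i : ℕ) = (j : ℕ) => hne (Fin.ext h)) with h | h
  · exact key i j h hij
  · exact key j i h hij.symm

lemma DWSet_nonempty [Finite K] (hA : A.Nonempty) :
    {ℓ | ∀ S : Multiset K, S.card = ℓ → IsGood A S}.Nonempty :=
  ⟨Nat.card K, card_mem_DWSet hA⟩

lemma zero_not_mem_DWSet : 0 ∉ {ℓ | ∀ S : Multiset K, S.card = ℓ → IsGood A S} := by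
  intro h
  obtain ⟨T, h0, hT, _, _⟩ := h (0 : Multiset K) (by simp)
  exact h0 (by simpa [Multiset.map_eq_zero] using Multiset.le_zero.mp hT)

lemma one_le_DW [Finite K] (hA : A.Nonempty) : 1 ≤ DW A K := by
  rw [DW_eq]
  by_contra h
  push_neg at h
  interval_cases hDW : sInf {ℓ | ∀ S : Multiset K, S.card = ℓ → IsGood A S}
  exact zero_not_mem_DWSet (hDW ▸ Nat.sInf_mem (DWSet_nonempty hA))

lemma exists_bad [Finite K] (hA : A.Nonempty) :
    ∃ S : Multiset K, S.card = DW A K - 1 ∧ ¬ IsGood A S := by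
  have h1 := one_le_DW (K := K) hA
  have hnot : DW A K - 1 ∉ {ℓ | ∀ S : Multiset K, S.card = ℓ → IsGood A S} := by
    intro h
    have := Nat.sInf_le h
    rw [← DW_eq] at this
    omega
  rw [Set.mem_setOf_eq] at hnot
  push_neg at hnot
  simpa using hnot

lemma lt_DW_of_not_good [Finite K] (hA : A.Nonempty) {S : Multiset K}
    (h : ¬ IsGood A S) : S.card < DW A K := by
  by_contra hle
  push_neg at hle
  have hmem := Nat.sInf_mem (DWSet_nonempty (K := K) hA)
  rw [← DW_eq] at hmem
  exact h (mem_DWSet_of_le hmem hle S rfl)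

lemma wSum_add (T T' : Multiset (ℤ × K)) : wSum (T + T') = wSum T + wSum T' := by
  simp [wSum]

lemma wSum_map_hom {K' : Type*} [AddCommGroup K'] (f : K →+ K') (T : Multiset (ℤ × K)) :
    wSum (T.map fun p => (p.1, f p.2)) = f (wSum T) := by
  rw [wSum, wSum, Multiset.map_map, map_multiset_sum, Multiset.map_map]
  congr 1
  apply Multiset.map_congr rfl
  intro p _
  simp [map_zsmul]

/-- If `u ≤ s + t`, all elements of `u` satisfy `P`, and no element of `s` does,
then `u ≤ t`. -/
lemma le_of_le_add_of_forall {u s t : Multiset K} (P : K → Prop) [DecidablePred P]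
    (h : u ≤ s + t) (hu : ∀ x ∈ u, P x) (hs : ∀ x ∈ s, ¬ P x) : u ≤ t := by
  have h1 : u.filter P ≤ (s + t).filter P := Multiset.filter_le_filter P h
  rw [Multiset.filter_add] at h1
  have hsf : s.filter P = 0 := by
    rw [Multiset.filter_eq_nil]
    exact hs
  rw [hsf, zero_add] at h1
  calc u = u.filter P := (Multiset.filter_eq_self.mpr hu).symm
    _ ≤ t.filter P := h1
    _ ≤ t := Multiset.filter_le P t

end Aux

/-- `D_A(G) ≥ D_A(H) + D_A(G/H) − 1`, stated additively to avoid truncated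
subtraction. -/
theorem DW_subgroup_quotient (G : Type*) [AddCommGroup G] [Fintype G]
    (H : AddSubgroup G) (A : Set ℤ) (hA : A.Nonempty) :
    DW A H + DW A (G ⧸ H) ≤ DW A G + 1 := by
  classical
  obtain ⟨w, hw⟩ := id hA
  obtain ⟨S₁, hS₁card, hS₁⟩ := exists_bad (A := A) (K := H) hA
  obtain ⟨S₂, hS₂card, hS₂⟩ := exists_bad (A := A) (K := G ⧸ H) hA
  have h1 : 1 ≤ DW A H := one_le_DW hA
  have h2 : 1 ≤ DW A (G ⧸ H) := one_le_DW hA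
  -- the lift of S₂ together with S₁
  set S : Multiset G := S₁.map (Subtype.val) + S₂.map (fun q => q.out) with hS
  -- 0 is not in S₂
  have hzS₂ : (0 : G ⧸ H) ∉ S₂ := by
    intro h0
    exact hS₂ ⟨{(w, 0)}, by simp, by simpa using Multiset.singleton_le.mpr h0,
      by simp [hw], by simp [wSum]⟩
  -- representatives of S₂ are not in H
  have hout : ∀ x ∈ S₂.map (fun q : G ⧸ H => q.out), x ∉ H := by
    intro x hx hxH
    obtain ⟨q, hq, rfl⟩ := Multiset.mem_map.mp hx
    have : (q.out : G ⧸ H) = 0 := (QuotientAddGroup.eq_zero_iff _).mpr hxH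
    rw [QuotientAddGroup.out_eq'] at this
    exact hzS₂ (this ▸ hq)
  have hin : ∀ x ∈ S₁.map (Subtype.val), x ∈ H := by
    intro x hx
    obtain ⟨h, _, rfl⟩ := Multiset.mem_map.mp hx
    exact h.2
  -- the combined sequence is not good
  have hbad : ¬ IsGood A S := by
    rintro ⟨T, hT0, hTle, hTA, hTw⟩
    set T₁ := T.filter (fun p => p.2 ∈ H) with hT₁
    set T₂ := T.filter (fun p => ¬ p.2 ∈ H) with hT₂
    have hsplit : T₁ + T₂ = T := Multiset.filter_add_not _ T
    -- T₂ projects to a good subsequence of S₂, hence is empty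
    have hT₂0 : T₂ = 0 := by
      by_contra hne
      apply hS₂
      refine ⟨T₂.map (fun p => (p.1, QuotientAddGroup.mk p.2)), ?_, ?_, ?_, ?_⟩
      · simpa [Multiset.map_eq_zero] using hne
      · have hle2 : T₂.map Prod.snd ≤ S₂.map (fun q : G ⧸ H => q.out) := by
          refine le_of_le_add_of_forall (fun x => ¬ x ∈ H)
            ((Multiset.map_le_map (Multiset.filter_le _ T)).trans hTle) ?_ ?_
          · intro x hx
            obtain ⟨p, hp, rfl⟩ := Multiset.mem_map.mp hx
            rw [hT₂] at hp
            exact (Multiset.mem_filter.mp hp).2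
          · intro x hx
            exact not_not.mpr (hin x hx)
        calc (T₂.map fun p => (p.1, QuotientAddGroup.mk p.2)).map Prod.snd
            = (T₂.map Prod.snd).map (QuotientAddGroup.mk) := by
              simp [Multiset.map_map, Function.comp]
          _ ≤ (S₂.map (fun q : G ⧸ H => q.out)).map QuotientAddGroup.mk :=
              Multiset.map_le_map hle2
          _ = S₂ := by
              rw [Multiset.map_map]
              simp [Function.comp, QuotientAddGroup.out_eq']
      · intro p hp
        obtain ⟨q, hq, rfl⟩ := Multiset.mem_map.mp hp
        exact hTA q (Multiset.mem_of_le (Multiset.filter_le _ T) hq)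
      · have h1' : wSum (T₂.map fun p => (p.1, QuotientAddGroup.mk p.2))
            = QuotientAddGroup.mk' H (wSum T₂) := wSum_map_hom (QuotientAddGroup.mk' H) T₂
        have hmem : wSum T₁ ∈ H := by
          rw [wSum]
          refine AddSubgroup.multiset_sum_mem H _ ?_
          intro x hx
          obtain ⟨p, hp, rfl⟩ := Multiset.mem_map.mp hx
          rw [hT₁] at hp
          exact zsmul_mem ((Multiset.mem_filter.mp hp).2) _
        have hsum0 : wSum T₁ + wSum T₂ = 0 := by
          rw [← wSum_add, hsplit, hTw]
        have : wSum T₂ ∈ H := by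
          have : wSum T₂ = -wSum T₁ := by
            rw [eq_neg_iff_add_eq_zero, add_comm]
            exact hsum0
          rw [this]
          exact neg_mem hmem
        rw [h1']
        exact (QuotientAddGroup.eq_zero_iff _).mpr this
    -- so T = T₁ consists of elements of H; it lifts to a good subsequence of S₁
    have hTeq : T₁ = T := by rw [← hsplit, hT₂0, add_zero]
    have hmemH : ∀ p ∈ T, p.2 ∈ H := by
      intro p hp
      rw [← hTeq, hT₁] at hp
      exact (Multiset.mem_filter.mp hp).2
    apply hS₁
    refine ⟨T.attach.map (fun p => (p.1.1, (⟨p.1.2, hmemH p.1 p.2⟩ : H))), ?_, ?_, ?_, ?_⟩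
    · simp only [ne_eq, Multiset.map_eq_zero]
      intro h
      exact hT0 (Multiset.card_eq_zero.mp
        (by rw [← Multiset.card_attach, h, Multiset.card_zero]))
    · rw [← Multiset.map_le_map_iff (f := (Subtype.val)) Subtype.coe_injective]
      have heq1 : ((T.attach.map fun p => (p.1.1, (⟨p.1.2, hmemH p.1 p.2⟩ : H))).map
          Prod.snd).map (Subtype.val) = T.map Prod.snd := by
        rw [Multiset.map_map, Multiset.map_map]
        have : T.attach.map (fun p => p.1.2) = T.map Prod.snd := by
          conv_rhs => rw [← Multiset.attach_map_val T]
          rw [Multiset.map_map]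
          rfl
        simpa [Function.comp] using this
      rw [heq1]
      refine le_of_le_add_of_forall (fun x => x ∈ H)
        (hTle.trans (le_of_eq (add_comm _ _))) ?_ hout
      · intro x hx
        obtain ⟨p, hp, rfl⟩ := Multiset.mem_map.mp hx
        exact hmemH p hp
    · intro p hp
      obtain ⟨q, _, rfl⟩ := Multiset.mem_map.mp hp
      exact hTA q.1 q.2
    · have h2' : wSum ((T.attach.map fun p => (p.1.1, (⟨p.1.2, hmemH p.1 p.2⟩ : H))).map
          (fun p => (p.1, (H.subtype p.2 : G))))
          = H.subtype (wSum (T.attach.map fun p => (p.1.1, (⟨p.1.2, hmemH p.1 p.2⟩ : H)))) :=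
        wSum_map_hom H.subtype _
      have heq2 : (T.attach.map fun p => (p.1.1, (⟨p.1.2, hmemH p.1 p.2⟩ : H))).map
          (fun p => (p.1, (H.subtype p.2 : G))) = T := by
        rw [Multiset.map_map]
        conv_rhs => rw [← Multiset.attach_map_val T]
        apply Multiset.map_congr rfl
        intro p _
        rfl
      rw [heq2, hTw] at h2'
      exact Subtype.coe_injective (by simpa using h2'.symm)
  have hlt : S.card < DW A G := lt_DW_of_not_good hA hbad
  have hcard : S.card = (DW A H - 1) + (DW A (G ⧸ H) - 1) := by
    simp [hS, hS₁card, hS₂card]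
  omega
end

section
/- Let G be a finite abelian group with exponent m, let A ⊆ ℤ be nonempty, fix a_0 ∈ A, and let d = gcd of the set (A − a_0) ∪ {m}. Then for every g ∈ G with d·g = 0, every sequence S = s_1⋯s_N over G, and every n ≤ N: the set of weighted n-sums of the translated sequence g + S equals n·a_0·g plus the set of weighted n-sums of S. That is, Σ_n(A, g+S) = n a_0 g + Σ_n(A, S), where Σ_n(A, S) = { Σ_{i=1}^n w_i t_i : t_1⋯t_n a subsequence of S of length n, w_i ∈ A }. -/
open scoped Pointwise

/-- The set `Σ_n(A, S)` of weighted `n`-sums of the sequence `S` with weights in `A`. -/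
def sigmaN {G : Type*} [AddCommGroup G] (A : Set ℤ) (n : ℕ) (S : Multiset G) : Set G :=
  {g | ∃ T : Multiset (ℤ × G), T.card = n ∧ T.map Prod.snd ≤ S ∧
    (∀ p ∈ T, p.1 ∈ A) ∧ wSum T = g}

lemma wSum_map_add {G : Type*} [AddCommGroup G] (c : G) (T : Multiset (ℤ × G)) :
    wSum (T.map fun p => (p.1, c + p.2)) = (T.map fun p => p.1 • c).sum + wSum T := by
  simp only [wSum, Multiset.map_map, Function.comp]
  rw [← Multiset.sum_map_add]
  congr 1
  apply Multiset.map_congr rfl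
  intro p hp
  simp [smul_add]

/-- Translation lemma: for `g ∈ G[d]`, `Σ_n(A, g + S) = n a₀ g + Σ_n(A, S)`. -/
theorem sigmaN_translate (G : Type*) [AddCommGroup G] [Fintype G]
    (A : Set ℤ) (a₀ : ℤ) (ha₀ : a₀ ∈ A) (d : ℤ)
    (hd : Ideal.span (insert (AddMonoid.exponent G : ℤ) ((· - a₀) '' A)) =
      Ideal.span {d})
    (g : G) (hg : d • g = 0) (S : Multiset G) (n : ℕ) (hn : n ≤ S.card) :
    sigmaN A n (S.map (g + ·)) = (((n : ℤ) * a₀) • g) +ᵥ sigmaN A n S := by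
  have hkey : ∀ w ∈ A, w • g = a₀ • g := by
    intro w hw
    have hmem : (w - a₀) ∈ Ideal.span ({d} : Set ℤ) := by
      rw [← hd]
      exact Ideal.subset_span (Set.mem_insert_of_mem _ ⟨w, hw, rfl⟩)
    obtain ⟨k, hk⟩ := Ideal.mem_span_singleton.mp hmem
    have : (w - a₀) • g = 0 := by
      rw [hk, mul_comm, mul_smul, hg, smul_zero]
    rw [sub_smul, sub_eq_zero] at this
    exact this
  have hsumg : ∀ (T : Multiset (ℤ × G)), (∀ p ∈ T, p.1 ∈ A) →
      (T.map fun p => p.1 • g).sum = (T.card : ℤ) • (a₀ • g) := by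
    intro T hA
    have : T.map (fun p => p.1 • g) = T.map (fun _ => a₀ • g) :=
      Multiset.map_congr rfl fun p hp => hkey p.1 (hA p hp)
    rw [this]
    simp [Multiset.map_const', Multiset.sum_replicate]
  ext x
  constructor
  · rintro ⟨T, hcard, hle, hA, hsum⟩
    refine ⟨wSum (T.map fun p => (p.1, -g + p.2)), ⟨T.map fun p => (p.1, -g + p.2),
      by simp [hcard], ?_, ?_, rfl⟩, ?_⟩
    · have h1 : (T.map fun p => (p.1, -g + p.2)).map Prod.snd
          = (T.map Prod.snd).map (-g + ·) := by
        simp [Multiset.map_map, Function.comp]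
      rw [h1]
      have := Multiset.map_le_map (f := (-g + ·)) hle
      simpa [Multiset.map_map, Function.comp, neg_add_cancel_left] using this
    · intro p hp
      obtain ⟨q, hq, rfl⟩ := Multiset.mem_map.mp hp
      exact hA q hq
    · show ((n : ℤ) * a₀) • g + _ = x
      rw [wSum_map_add]
      have h2 : (T.map fun p => p.1 • (-g)).sum = -(((n : ℤ)) • (a₀ • g)) := by
        have h3 := hsumg T hA
        rw [hcard] at h3
        have h4 : ∀ U : Multiset (ℤ × G),
            (U.map fun p => -(p.1 • g)).sum = -(U.map fun p => p.1 • g).sum := by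
          intro U
          induction U using Multiset.induction with
          | empty => simp
          | cons a s ih => simp [ih, neg_add]; abel
        rw [show (fun p : ℤ × G => p.1 • (-g)) = (fun p : ℤ × G => -(p.1 • g)) from
          funext fun p => smul_neg _ _, h4, h3]
      rw [h2, hsum, mul_smul]
      abel
  · rintro ⟨y, ⟨T, hcard, hle, hA, hsum⟩, rfl⟩
    refine ⟨T.map fun p => (p.1, g + p.2), by simp [hcard], ?_, ?_, ?_⟩
    · have h1 : (T.map fun p => (p.1, g + p.2)).map Prod.snd
          = (T.map Prod.snd).map (g + ·) := by
        simp [Multiset.map_map, Function.comp]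
      rw [h1]
      exact Multiset.map_le_map hle
    · intro p hp
      obtain ⟨q, hq, rfl⟩ := Multiset.mem_map.mp hp
      exact hA q hq
    · rw [wSum_map_add, hsumg T hA, hcard]
      show _ = ((n : ℤ) * a₀) • g + y
      rw [hsum, mul_smul]
end

section
/- Let G be an abelian group of exponent m, K ≤ G a subgroup, β ∈ G, and A ⊆ ℤ nonempty with gcd(A ∪ {m}) = 1. Set d = gcd((A − a_0) ∪ {m}) for some a_0 ∈ A. If g_1, g_2 ∈ G satisfy A·g_i ⊆ β + K for i = 1,2 (where A·g = {a g : a ∈ A}), then d g_1, d g_2 ∈ K and g_1 − g_2 ∈ K (i.e., g_1 and g_2 lie in a common coset α + K). -/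
/-- The set of integers `n` with `n • g ∈ K` is an ideal of `ℤ`. -/
def smulIdeal {G : Type*} [AddCommGroup G] (K : AddSubgroup G) (g : G) : Ideal ℤ where
  carrier := {n : ℤ | n • g ∈ K}
  zero_mem' := by simp [K.zero_mem]
  add_mem' := by
    intro a b ha hb
    simpa [add_smul] using K.add_mem ha hb
  smul_mem' := by
    intro c n hn
    simpa [smul_eq_mul, mul_smul] using K.zsmul_mem hn c

theorem exp_mem_smulIdeal {G : Type*} [AddCommGroup G] (K : AddSubgroup G) (g : G) :
    (AddMonoid.exponent G : ℤ) ∈ smulIdeal K g := by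
  show ((AddMonoid.exponent G : ℤ)) • g ∈ K
  rw [natCast_zsmul, AddMonoid.exponent_nsmul_eq_zero g]
  exact K.zero_mem

/-- Coset lemma: if `A·g₁, A·g₂ ⊆ β + K` then `d g₁, d g₂ ∈ K` and `g₁ − g₂ ∈ K`. -/
theorem coset_lemma (G : Type*) [AddCommGroup G] [Fintype G]
    (K : AddSubgroup G) (β : G) (A : Set ℤ) (hA : A.Nonempty)
    (hgcd1 : Ideal.span (insert (AddMonoid.exponent G : ℤ) A) = ⊤)
    (a₀ : ℤ) (ha₀ : a₀ ∈ A) (d : ℤ)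
    (hd : Ideal.span (insert (AddMonoid.exponent G : ℤ) ((· - a₀) '' A)) =
      Ideal.span {d})
    (g₁ g₂ : G) (h₁ : ∀ a ∈ A, a • g₁ - β ∈ K) (h₂ : ∀ a ∈ A, a • g₂ - β ∈ K) :
    d • g₁ ∈ K ∧ d • g₂ ∈ K ∧ g₁ - g₂ ∈ K := by
  have key : ∀ g : G, (∀ a ∈ A, a • g - β ∈ K) → d • g ∈ K := by
    intro g hg
    have hsub : insert (AddMonoid.exponent G : ℤ) ((· - a₀) '' A) ⊆ smulIdeal K g := by
      rintro x (rfl | ⟨a, ha, rfl⟩)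
      · exact exp_mem_smulIdeal K g
      · show (a - a₀) • g ∈ K
        have : (a - a₀) • g = (a • g - β) - (a₀ • g - β) := by
          rw [sub_smul]; abel
        rw [this]
        exact K.sub_mem (hg a ha) (hg a₀ ha₀)
    have hle : Ideal.span (insert (AddMonoid.exponent G : ℤ) ((· - a₀) '' A)) ≤
        smulIdeal K g := Ideal.span_le.mpr hsub
    exact hle (hd ▸ Ideal.subset_span rfl : d ∈ _)
  refine ⟨key g₁ h₁, key g₂ h₂, ?_⟩
  have hsub : insert (AddMonoid.exponent G : ℤ) A ⊆ smulIdeal K (g₁ - g₂) := by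
    rintro x (rfl | hx)
    · exact exp_mem_smulIdeal K _
    · show x • (g₁ - g₂) ∈ K
      have : x • (g₁ - g₂) = (x • g₁ - β) - (x • g₂ - β) := by
        rw [smul_sub]; abel
      rw [this]
      exact K.sub_mem (h₁ x hx) (h₂ x hx)
  have hle : Ideal.span (insert (AddMonoid.exponent G : ℤ) A) ≤ smulIdeal K (g₁ - g₂) :=
    Ideal.span_le.mpr hsub
  have h1 : (1 : ℤ) ∈ smulIdeal K (g₁ - g₂) := hle (hgcd1 ▸ Submodule.mem_top)
  have : (1 : ℤ) • (g₁ - g₂) ∈ K := h1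
  simpa using this
end

section
/- Let G_0 be a finite abelian group with subgroups H ≤ G ≤ G_0, let α, β ∈ G_0, and A ⊆ ℤ nonempty with A·α ⊆ β + H. If S is a sequence over the coset α + G of length at least D_A(G/H), then there exist a nonempty subsequence s_1⋯s_r of S and weights w_1,…,w_r ∈ A such that w_1 s_1 + ⋯ + w_r s_r ∈ rβ + H. -/
/-- lifting a multiset of pairs along a map on second coordinates -/
lemma lift_pairs {X Y : Type*} (f : X → Y) (t : Multiset (ℤ × Y)) :
    ∀ s : Multiset X, t.map Prod.snd ≤ s.map f →
    ∃ T : Multiset (ℤ × X), T.map Prod.snd ≤ s ∧ T.map (Prod.map id f) = t := by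
  classical
  induction t using Multiset.induction_on with
  | empty => exact fun s _ => ⟨0, by simp, by simp⟩
  | cons p t ih =>
    intro s h
    have hq : p.2 ∈ s.map f := Multiset.mem_of_le h (by simp)
    obtain ⟨x, hx, hfx⟩ := Multiset.mem_map.1 hq
    have h2 : t.map Prod.snd ≤ (s.erase x).map f := by
      have h3 := Multiset.erase_le_erase p.2 h
      rw [Multiset.map_cons, Multiset.erase_cons_head] at h3
      rwa [Multiset.map_erase_of_mem f s hx, hfx]
    obtain ⟨T, hT1, hT2⟩ := ih (s.erase x) h2
    refine ⟨(p.1, x) ::ₘ T, ?_, ?_⟩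
    · rw [Multiset.map_cons]
      calc x ::ₘ T.map Prod.snd ≤ x ::ₘ s.erase x := Multiset.cons_le_cons _ hT1
        _ = s := Multiset.cons_erase hx
    · rw [Multiset.map_cons, hT2]
      simp [Prod.map, hfx]

lemma wSum_map_hom_s5 {G G' : Type*} [AddCommGroup G] [AddCommGroup G'] (f : G →+ G')
    (T : Multiset (ℤ × G)) : wSum (T.map (Prod.map id f)) = f (wSum T) := by
  unfold wSum
  rw [Multiset.map_map, AddMonoidHom.map_multiset_sum, Multiset.map_map]
  congr 1
  apply Multiset.map_congr rfl
  intro p _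
  simp [Prod.map]

/-- pigeonhole: any long enough sequence has a nonempty weighted zero-sum subsequence -/
lemma exists_zero_wsum {Q : Type*} [AddCommGroup Q] [Fintype Q] (A : Set ℤ) (hA : A.Nonempty)
    (S : Multiset Q) (hcard : Fintype.card Q ≤ S.card) :
    ∃ T : Multiset (ℤ × Q), T ≠ 0 ∧ T.map Prod.snd ≤ S ∧ (∀ p ∈ T, p.1 ∈ A) ∧ wSum T = 0 := by
  classical
  obtain ⟨a, ha⟩ := hA
  set l : List Q := S.toList with hl
  have hlen : l.length = S.card := S.length_toList
  have hcard' : Fintype.card Q < Fintype.card (Fin (l.length + 1)) := by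
    simp [hlen]; omega
  obtain ⟨i, j, hij, heq⟩ := Fintype.exists_ne_map_eq_of_card_lt
    (fun k : Fin (l.length + 1) => a • (l.take k).sum) hcard'
  -- wlog i < j
  wlog hlt : (i : ℕ) < (j : ℕ) generalizing i j
  · exact this j i hij.symm heq.symm (by omega)
  set seg : List Q := (l.drop i).take (j - i) with hseg
  have hsegne : seg ≠ [] := by
    have : seg.length = min ((j:ℕ) - i) (l.length - i) := by simp [hseg]
    have hj : (j : ℕ) ≤ l.length := by omega
    intro hnil
    rw [hnil] at this
    simp at this
    omega
  have htake : l.take j = l.take i ++ seg := by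
    have : (j : ℕ) = i + ((j:ℕ) - i) := by omega
    rw [hseg, ← List.take_add, ← this]
  have hsum : a • seg.sum = 0 := by
    have h1 : a • (l.take j).sum = a • (l.take i).sum := heq.symm
    rw [htake, List.sum_append, smul_add] at h1
    exact by linear_combination (norm := abel) h1
  have hsub : seg.Sublist l := ((l.drop i).take_sublist _).trans (l.drop_sublist i)
  refine ⟨(seg.map (fun x => (a, x)) : List (ℤ × Q)), ?_, ?_, ?_, ?_⟩
  · simp [hsegne]
  · have : ((seg.map (fun x => (a, x)) : List (ℤ × Q)) : Multiset (ℤ × Q)).map Prod.snd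
        = (seg : Multiset Q) := by
      simp [Multiset.map_coe, List.map_map, Function.comp]
    rw [this]
    have : (seg : Multiset Q) ≤ (l : Multiset Q) := hsub.subperm
    rwa [hl, Multiset.coe_toList] at this
  · intro p hp
    simp only [Multiset.mem_coe, List.mem_map] at hp
    obtain ⟨x, _, rfl⟩ := hp
    exact ha
  · unfold wSum
    rw [Multiset.map_coe, List.map_map]
    have : ((fun p : ℤ × Q => p.1 • p.2) ∘ fun x => (a, x)) = fun x => a • x := rfl
    rw [this, Multiset.sum_coe, ← List.smul_sum, hsum]

theorem DW_mem_aux {Q : Type*} [AddCommGroup Q] [Finite Q] (A : Set ℤ) (hA : A.Nonempty)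
    (n : ℕ) (hn : DW A Q ≤ n) :
    n ∈ {ℓ | ∀ S : Multiset Q, S.card = ℓ →
      ∃ T : Multiset (ℤ × Q), T ≠ 0 ∧ T.map Prod.snd ≤ S ∧ (∀ p ∈ T, p.1 ∈ A) ∧ wSum T = 0} := by
  classical
  haveI : Fintype Q := Fintype.ofFinite Q
  set Sset := {ℓ | ∀ S : Multiset Q, S.card = ℓ →
      ∃ T : Multiset (ℤ × Q), T ≠ 0 ∧ T.map Prod.snd ≤ S ∧ (∀ p ∈ T, p.1 ∈ A) ∧ wSum T = 0}
  have hne : Sset.Nonempty := by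
    refine ⟨Fintype.card Q, fun S hcard => ?_⟩
    exact exists_zero_wsum A hA S (le_of_eq hcard.symm)
  have hmem : DW A Q ∈ Sset := Nat.sInf_mem hne
  -- upward closure
  have up : ∀ m, m ∈ Sset → m + 1 ∈ Sset := by
    intro m hm S hcard
    have hpos : S ≠ 0 := by
      intro h0; rw [h0] at hcard; simp at hcard
    obtain ⟨x, hx⟩ := Multiset.exists_mem_of_ne_zero hpos
    have hcard' : (S.erase x).card = m := by
      rw [Multiset.card_erase_of_mem hx, hcard]; rfl
    obtain ⟨T, hT0, hT1, hT2, hT3⟩ := hm (S.erase x) hcard'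
    exact ⟨T, hT0, le_trans hT1 (Multiset.erase_le x S), hT2, hT3⟩
  -- induct from DW A Q to n
  clear hne
  induction n with
  | zero => simpa [Nat.le_zero.1 hn] using hmem
  | succ k ih =>
    rcases Nat.lt_or_ge (DW A Q) (k + 1) with h | h
    · exact up k (ih (by omega))
    · have : DW A Q = k + 1 := le_antisymm hn h
      rwa [← this]

/-- If `A·α ⊆ β + H` and `S` is a sequence over the coset `α + G` of length at
least `D_A(G/H)`, then some nonempty weighted subsequence-sum lies in `rβ + H`. -/
theorem confusing_lemma (G₀ : Type*) [AddCommGroup G₀] [Fintype G₀]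
    (G H : AddSubgroup G₀) (hHG : H ≤ G) (α β : G₀)
    (A : Set ℤ) (hA : A.Nonempty) (hAα : ∀ a ∈ A, a • α - β ∈ H)
    (S : Multiset G₀) (hS : ∀ s ∈ S, s - α ∈ G)
    (hlen : DW A (↥G ⧸ H.addSubgroupOf G) ≤ S.card) :
    ∃ T : Multiset (ℤ × G₀), T ≠ 0 ∧ T.map Prod.snd ≤ S ∧ (∀ p ∈ T, p.1 ∈ A) ∧
      wSum T - (T.card : ℤ) • β ∈ H := by
  classical
  set Q := ↥G ⧸ H.addSubgroupOf G with hQ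
  -- the map from elements of S to the quotient
  set φ : {x // x ∈ S} → ↥G := fun s => ⟨(s : G₀) - α, hS s s.2⟩ with hφ
  set g : {x // x ∈ S} → Q := fun s => QuotientAddGroup.mk (φ s) with hg
  set Sq : Multiset Q := S.attach.map g with hSq
  have hSqcard : Sq.card = S.card := by simp [hSq]
  have hprop := DW_mem_aux A hA S.card hlen Sq hSqcard
  obtain ⟨T', hT'0, hT'1, hT'2, hT'3⟩ := hprop
  rw [hSq] at hT'1
  obtain ⟨Tg, hTg1, hTg2⟩ := lift_pairs g T' S.attach hT'1
  refine ⟨Tg.map (fun p => (p.1, (p.2 : G₀))), ?_, ?_, ?_, ?_⟩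
  · intro h0
    rw [Multiset.map_eq_zero] at h0
    rw [h0] at hTg2
    simp at hTg2
    exact hT'0 hTg2.symm
  · rw [Multiset.map_map]
    have : (Prod.snd ∘ fun p : ℤ × {x // x ∈ S} => (p.1, (p.2 : G₀)))
        = (fun x : {x // x ∈ S} => (x : G₀)) ∘ Prod.snd := rfl
    rw [this, ← Multiset.map_map]
    calc (Tg.map Prod.snd).map (fun x : {x // x ∈ S} => (x : G₀))
        ≤ S.attach.map (fun x : {x // x ∈ S} => (x : G₀)) := Multiset.map_le_map hTg1
      _ = S := by simp
  · intro p hp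
    rw [Multiset.mem_map] at hp
    obtain ⟨q, hq, rfl⟩ := hp
    have : Prod.map id g q ∈ T' := hTg2 ▸ Multiset.mem_map_of_mem _ hq
    have := hT'2 _ this
    simpa using this
  · -- the main computation
    set Th : Multiset (ℤ × ↥G) := Tg.map (Prod.map id φ) with hTh
    have hThmk : Th.map (Prod.map id (QuotientAddGroup.mk' (H.addSubgroupOf G))) = T' := by
      rw [hTh, Multiset.map_map, ← hTg2]
      apply Multiset.map_congr rfl
      intro p _
      rfl
    have hmk : QuotientAddGroup.mk' (H.addSubgroupOf G) (wSum Th) = 0 := by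
      rw [← wSum_map_hom_s5 (QuotientAddGroup.mk' (H.addSubgroupOf G)) Th, hThmk, hT'3]
    have hWThmem : wSum Th ∈ H.addSubgroupOf G := by
      rwa [QuotientAddGroup.mk'_apply, QuotientAddGroup.eq_zero_iff] at hmk
    have hX : ((wSum Th : ↥G) : G₀) ∈ H := (AddSubgroup.mem_addSubgroupOf).1 hWThmem
    have hXval : ((wSum Th : ↥G) : G₀)
        = (Tg.map (fun p => p.1 • ((p.2 : G₀) - α))).sum := by
      have h1 : (G.subtype) (wSum Th) = wSum (Th.map (Prod.map id G.subtype)) :=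
        (wSum_map_hom_s5 G.subtype Th).symm
      have h2 : Th.map (Prod.map id G.subtype)
          = Tg.map (fun p => (p.1, (p.2 : G₀) - α)) := by
        rw [hTh, Multiset.map_map]
        apply Multiset.map_congr rfl
        intro p _
        rfl
      have h3 : wSum (Tg.map (fun p : ℤ × {x // x ∈ S} => (p.1, (p.2 : G₀) - α)))
          = (Tg.map (fun p => p.1 • ((p.2 : G₀) - α))).sum := by
        unfold wSum
        rw [Multiset.map_map]
        rfl
      rw [AddSubgroup.coe_subtype] at h1 h2
      rw [h1, h2, h3]
    have hY : (Tg.map (fun p => p.1 • α - β)).sum ∈ H := by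
      apply AddSubgroup.multiset_sum_mem
      intro x hx
      rw [Multiset.mem_map] at hx
      obtain ⟨q, hq, rfl⟩ := hx
      have : Prod.map id g q ∈ T' := hTg2 ▸ Multiset.mem_map_of_mem _ hq
      exact hAα _ (by simpa using hT'2 _ this)
    -- algebraic identity
    have key : ∀ M : Multiset (ℤ × {x // x ∈ S}),
        (M.map (fun p => p.1 • ((p.2 : G₀)))).sum
        = (M.map (fun p => p.1 • ((p.2 : G₀) - α))).sum
          + ((M.map (fun p => p.1 • α - β)).sum + (M.card : ℤ) • β) := by
      intro M
      induction M using Multiset.induction_on with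
      | empty => simp
      | @cons p M ih =>
        simp only [Multiset.map_cons, Multiset.sum_cons, Multiset.card_cons, ih, smul_sub]
        push_cast
        rw [add_smul]
        abel
    have hwT : wSum (Tg.map (fun p : ℤ × {x // x ∈ S} => (p.1, (p.2 : G₀))))
        = (Tg.map (fun p => p.1 • ((p.2 : G₀)))).sum := by
      unfold wSum
      rw [Multiset.map_map]
      rfl
    have hcardT : (Tg.map (fun p : ℤ × {x // x ∈ S} => (p.1, (p.2 : G₀)))).card = Tg.card :=
      Multiset.card_map _ _
    rw [hwT, hcardT, key Tg]
    have : (Tg.map fun p => p.1 • ((p.2 : G₀) - α)).sum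
          + ((Tg.map fun p => p.1 • α - β).sum + (Tg.card : ℤ) • β) - (Tg.card : ℤ) • β
        = (Tg.map fun p => p.1 • ((p.2 : G₀) - α)).sum
          + (Tg.map fun p => p.1 • α - β).sum := by abel
    rw [this]
    exact AddSubgroup.add_mem H (hXval ▸ hX) hY
end

section
/- Let G be a finite abelian group and K ≤ G a nontrivial subgroup. Let 𝒜 = A_1⋯A_r be a setpartition over G (a sequence of finite nonempty subsets of G) with |A_i| ≥ 2 and each A_i contained in a single K-coset, for all i. If r ≥ |K| − 1, then there exist a nontrivial subgroup H ≤ K, a sub-setpartition 𝒜′ of 𝒜, and a sub-setpartition 𝒜″ of 𝒜′ such that: |𝒜″| = |H| − 1; |𝒜′| ≥ min{|𝒜|, |𝒜| − |K/H| + 2}; the sumset A over all sets in 𝒜″ has cardinality exactly |H|; and every set in 𝒜′ is contained in a single H-coset. -/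
open scoped Pointwise

section Helpers
variable {G : Type*} [AddCommGroup G] [DecidableEq G]

lemma zero_mem_msum {𝒞 : Multiset (Finset G)} (h : ∀ C ∈ 𝒞, (0:G) ∈ C) :
    (0:G) ∈ 𝒞.sum := by
  induction 𝒞 using Multiset.induction with
  | empty => simp
  | cons C 𝒞 ih =>
    rw [Multiset.sum_cons]
    have := Finset.add_mem_add (h C (Multiset.mem_cons_self _ _))
      (ih fun D hD => h D (Multiset.mem_cons_of_mem hD))
    simpa using this

lemma msum_mem_subgroup {K : AddSubgroup G} {𝒞 : Multiset (Finset G)}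
    (h : ∀ C ∈ 𝒞, ∀ x ∈ C, x ∈ K) : ∀ x ∈ 𝒞.sum, x ∈ K := by
  induction 𝒞 using Multiset.induction with
  | empty => intro x hx; simp at hx; subst hx; exact K.zero_mem
  | cons C 𝒞 ih =>
    intro x hx
    rw [Multiset.sum_cons] at hx
    obtain ⟨y, hy, z, hz, rfl⟩ := Finset.mem_add.mp hx
    exact K.add_mem (h C (Multiset.mem_cons_self _ _) y hy)
      (ih (fun D hD => h D (Multiset.mem_cons_of_mem hD)) z hz)

lemma vadd_add_left (a : G) (s t : Finset G) : a +ᵥ (s + t) = (a +ᵥ s) + t := by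
  rw [← Finset.singleton_add, ← Finset.singleton_add, add_assoc]

lemma vadd_add_right (a : G) (s t : Finset G) : a +ᵥ (s + t) = s + (a +ᵥ t) := by
  rw [← Finset.singleton_add, ← Finset.singleton_add, add_left_comm]

lemma msum_map_vadd (𝒜 : Multiset (Finset G)) (g : Finset G → G) :
    (𝒜.map (fun B => g B +ᵥ B)).sum = (𝒜.map g).sum +ᵥ 𝒜.sum := by
  induction 𝒜 using Multiset.induction with
  | empty => simp
  | cons B 𝒜 ih =>
    simp only [Multiset.map_cons, Multiset.sum_cons, ih]
    rw [← Finset.singleton_add, ← Finset.singleton_add, ← Finset.singleton_add,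
      add_add_add_comm, Finset.singleton_add_singleton]

lemma greedy (f : Finset G → Finset G) (𝒜 : Multiset (Finset G))
    (h0 : ∀ B ∈ 𝒜, (0:G) ∈ f B) :
    ∃ 𝒜₀, 𝒜₀ ≤ 𝒜 ∧ (𝒜₀.map f).sum = (𝒜.map f).sum ∧
      𝒜₀.card + 1 ≤ ((𝒜.map f).sum).card := by
  induction 𝒜 using Multiset.induction with
  | empty => exact ⟨0, le_rfl, rfl, by simp⟩
  | cons B 𝒜 ih =>
    obtain ⟨𝒜₀, hle, hsum, hcard⟩ := ih (fun D hD => h0 D (Multiset.mem_cons_of_mem hD))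
    have hsubset : (𝒜.map f).sum ⊆ f B + (𝒜.map f).sum := by
      intro x hx
      have := Finset.add_mem_add (h0 B (Multiset.mem_cons_self _ _)) hx
      simpa using this
    by_cases hEq : f B + (𝒜.map f).sum = (𝒜.map f).sum
    · refine ⟨𝒜₀, hle.trans (Multiset.le_cons_self _ _), ?_, ?_⟩
      · rw [Multiset.map_cons, Multiset.sum_cons, hEq, hsum]
      · rw [Multiset.map_cons, Multiset.sum_cons, hEq]; exact hcard
    · have hss : (𝒜.map f).sum ⊂ f B + (𝒜.map f).sum :=
        ssubset_of_subset_of_ne hsubset (fun h => hEq h.symm)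
      have hlt := Finset.card_lt_card hss
      refine ⟨B ::ₘ 𝒜₀, Multiset.cons_le_cons _ hle, ?_, ?_⟩
      · rw [Multiset.map_cons, Multiset.sum_cons, Multiset.map_cons, Multiset.sum_cons, hsum]
      · rw [Multiset.map_cons, Multiset.sum_cons, Multiset.card_cons]
        omega

lemma exists_le_card {α : Type*} (M : Multiset α) (k : ℕ) (hk : k ≤ M.card) :
    ∃ N, N ≤ M ∧ N.card = k := by
  refine ⟨(M.toList.take k : List α), ?_, ?_⟩
  · calc ((M.toList.take k : List α) : Multiset α) ≤ (M.toList : Multiset α) :=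
        (M.toList.take_sublist k).subperm
    _ = M := M.coe_toList
  · have : M.toList.length = M.card := Multiset.length_toList M
    simp only [Multiset.coe_card, List.length_take]
    omega

lemma le_of_le_cons_of_not_mem {α : Type*} [DecidableEq α] {ℬ 𝒞 : Multiset α} {C : α}
    (hle : ℬ ≤ C ::ₘ 𝒞) (hC : C ∉ ℬ) : ℬ ≤ 𝒞 := by
  rw [Multiset.le_iff_count] at hle ⊢
  intro a
  have h1 := hle a
  rcases eq_or_ne a C with rfl | hne
  · simp [Multiset.count_eq_zero_of_notMem hC]
  · simpa [Multiset.count_cons_of_ne hne] using h1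

end Helpers

section Stab
variable {G : Type*} [AddCommGroup G] [DecidableEq G]

lemma stab_vadd_eq {T : Finset G} {g : G} (h : g ∈ AddAction.stabilizer G T) :
    g +ᵥ T = T := AddAction.mem_stabilizer_iff.mp h

lemma stab_le_stab_add (C T : Finset G) :
    AddAction.stabilizer G T ≤ AddAction.stabilizer G (C + T) := by
  intro g hg
  rw [AddAction.mem_stabilizer_iff]
  rw [vadd_add_right, stab_vadd_eq hg]

lemma card_eq_card_quot_mul [Fintype G] (L : AddSubgroup G) [DecidableEq (G ⧸ L)]
    (T : Finset G) (hL : ∀ g ∈ L, g +ᵥ T = T) :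
    T.card = Nat.card L * (T.image (QuotientAddGroup.mk : G → G ⧸ L)).card := by
  classical
  have key : ∀ q ∈ T.image (QuotientAddGroup.mk : G → G ⧸ L),
      (T.filter fun x => (QuotientAddGroup.mk x : G ⧸ L) = q).card = Nat.card L := by
    intro q hq
    obtain ⟨a, ha, rfl⟩ := Finset.mem_image.mp hq
    have himg : T.filter (fun x => (QuotientAddGroup.mk x : G ⧸ L) = QuotientAddGroup.mk a)
        = (L : Set G).toFinset.image (fun h => a + h) := by
      ext x
      simp only [Finset.mem_filter, Finset.mem_image, Set.mem_toFinset, SetLike.mem_coe]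
      constructor
      · rintro ⟨hxT, hxa⟩
        refine ⟨-a + x, ?_, by abel⟩
        exact (QuotientAddGroup.eq).mp hxa.symm
      · rintro ⟨h, hh, rfl⟩
        constructor
        · have hT := hL h hh
          rw [← hT]
          have : h + a ∈ h +ᵥ T := Finset.vadd_mem_vadd_finset ha
          simpa [add_comm] using this
        · rw [QuotientAddGroup.eq]
          simpa using L.neg_mem hh
    rw [himg, Finset.card_image_of_injective _ (add_right_injective a),
      Set.toFinset_card, Nat.card_eq_fintype_card]
    rfl
  rw [Finset.card_eq_sum_card_image (QuotientAddGroup.mk : G → G ⧸ L) T,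
    Finset.sum_congr rfl key, Finset.sum_const, smul_eq_mul, mul_comm]

lemma stab_image_eq_bot [Fintype G] (T : Finset G) (L : AddSubgroup G)
    [DecidableEq (G ⧸ L)] (hLdef : L = AddAction.stabilizer G T) :
    AddAction.stabilizer (G ⧸ L)
      (T.image (QuotientAddGroup.mk : G → G ⧸ L)) = ⊥ := by
  rw [eq_bot_iff]
  intro q hq
  obtain ⟨g, rfl⟩ := QuotientAddGroup.mk_surjective q
  have hq' := AddAction.mem_stabilizer_iff.mp hq
  have hsub : g +ᵥ T ⊆ T := by
    intro y hy
    obtain ⟨t, ht, rfl⟩ := Finset.mem_vadd_finset.mp hy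
    have hmem : (QuotientAddGroup.mk (g +ᵥ t) : G ⧸ L) ∈ T.image QuotientAddGroup.mk := by
      rw [← hq']
      have : (QuotientAddGroup.mk g : G ⧸ L) +ᵥ (QuotientAddGroup.mk t : G ⧸ L)
          ∈ (QuotientAddGroup.mk g : G ⧸ L) +ᵥ T.image (QuotientAddGroup.mk : G → G ⧸ L) :=
        Finset.vadd_mem_vadd_finset (Finset.mem_image_of_mem _ ht)
      simpa [vadd_eq_add] using this
    obtain ⟨t', ht', hEq⟩ := Finset.mem_image.mp hmem
    have hL : -t' + (g +ᵥ t) ∈ L := (QuotientAddGroup.eq).mp hEq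
    rw [hLdef] at hL
    have hvadd := stab_vadd_eq (T := T) hL
    have : (-t' + (g +ᵥ t)) + t' ∈ (-t' + (g +ᵥ t)) +ᵥ T := Finset.vadd_mem_vadd_finset ht'
    rw [hvadd] at this
    simpa [vadd_eq_add, add_comm, add_left_comm] using this
  have hcardle : T.card ≤ (g +ᵥ T).card := by rw [Finset.card_vadd_finset]
  have : g +ᵥ T = T := Finset.eq_of_subset_of_card_le hsub hcardle
  have hgL : g ∈ L := hLdef ▸ AddAction.mem_stabilizer_iff.mpr this
  simpa [AddSubgroup.mem_bot] using (QuotientAddGroup.eq_zero_iff g).mpr hgL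

end Stab

universe u

theorem weak_kneser : ∀ (n : ℕ) (G : Type u) [AddCommGroup G] [Fintype G] [DecidableEq G]
    (𝒞 ℬ : Multiset (Finset G)), 𝒞.card ≤ n → (∀ C ∈ 𝒞, (0:G) ∈ C) → ℬ ≤ 𝒞 →
    (∀ B ∈ ℬ, ¬ ∀ x ∈ B, x ∈ AddAction.stabilizer G 𝒞.sum) →
    Nat.card (AddAction.stabilizer G 𝒞.sum) * (1 + ℬ.card) ≤ (𝒞.sum).card := by
  intro n
  induction n with
  | zero =>
    intro G _ _ _ 𝒞 ℬ hcard h0 hle hbad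
    have h𝒞 : 𝒞 = 0 := Multiset.card_eq_zero.mp (Nat.le_zero.mp hcard)
    subst h𝒞
    have hℬ : ℬ = 0 := Multiset.le_zero.mp hle
    subst hℬ
    have hsum : (0 : Multiset (Finset G)).sum = ({0} : Finset G) := rfl
    have hstab : AddAction.stabilizer G ((0 : Multiset (Finset G)).sum) = ⊥ := by
      rw [hsum]
      ext g
      simp [AddAction.mem_stabilizer_iff, Finset.vadd_finset_def]
    rw [hstab, hsum]
    simp
  | succ n IH =>
    intro G _ _ _ 𝒞 ℬ hcard h0 hle hbad
    rcases eq_or_ne 𝒞 0 with rfl | hne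
    · have hℬ : ℬ = 0 := Multiset.le_zero.mp hle
      subst hℬ
      have hsum : (0 : Multiset (Finset G)).sum = ({0} : Finset G) := rfl
      have hstab : AddAction.stabilizer G ((0 : Multiset (Finset G)).sum) = ⊥ := by
        rw [hsum]
        ext g
        simp [AddAction.mem_stabilizer_iff, Finset.vadd_finset_def]
      rw [hstab, hsum]
      simp
    · obtain ⟨C, hC𝒞⟩ := Multiset.exists_mem_of_ne_zero hne
      obtain ⟨𝒞₀, rfl⟩ := Multiset.exists_cons_of_mem hC𝒞
      classical
      set L := AddAction.stabilizer G ((C ::ₘ 𝒞₀).sum) with hLdef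
      set Q := G ⧸ L with hQdef
      letI : Fintype Q := Fintype.ofFinite Q
      letI : DecidableEq Q := Classical.decEq Q
      set π : G → Q := (QuotientAddGroup.mk : G → G ⧸ L) with hπdef
      have himg_add : ∀ s t : Finset G, (s + t).image π = s.image π + t.image π := by
        intro s t
        exact Finset.image_add (QuotientAddGroup.mk' L)
      have himg_sum : ∀ (ℳ : Multiset (Finset G)),
          (ℳ.map (fun C => C.image π)).sum = (ℳ.sum).image π := by
        intro ℳ
        induction ℳ using Multiset.induction with
        | empty =>
          simp only [Multiset.map_zero, Multiset.sum_zero]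
          rw [show (0 : Finset G) = ({0} : Finset G) from rfl, Finset.image_singleton]
          rw [show π (0:G) = (0:Q) from rfl]
          rfl
        | cons D ℳ ih =>
          simp only [Multiset.map_cons, Multiset.sum_cons, ih, himg_add]
      -- notation
      have hsum_cons : (C ::ₘ 𝒞₀).sum = C + 𝒞₀.sum := Multiset.sum_cons C 𝒞₀
      set T' : Finset G := (C ::ₘ 𝒞₀).sum with hT'def
      set Tb : Finset Q := (𝒞₀.sum).image π with hTbdef
      set Tb' : Finset Q := T'.image π with hTb'def
      have hTb' : Tb' = C.image π + Tb := by
        rw [hTb'def, hTbdef, ← himg_add, ← hsum_cons]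
      -- stabilizer of Tb' is trivial
      have hstabTb' : AddAction.stabilizer Q Tb' = ⊥ :=
        stab_image_eq_bot T' L hLdef
      have hstabTb : AddAction.stabilizer Q Tb = ⊥ := by
        rw [eq_bot_iff, ← hstabTb', hTb']
        exact stab_le_stab_add _ _
      -- IH in quotient
      have h𝒞₀card : 𝒞₀.card ≤ n := by
        have := Multiset.card_cons C 𝒞₀ ▸ hcard
        omega
      have h0Q : ∀ D ∈ 𝒞₀.map (fun C => C.image π), (0:Q) ∈ D := by
        intro D hD
        obtain ⟨B, hB, rfl⟩ := Multiset.mem_map.mp hD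
        have : (0:G) ∈ B := h0 B (Multiset.mem_cons_of_mem hB)
        have h0π : π (0:G) = 0 := rfl
        exact h0π ▸ Finset.mem_image_of_mem π this
      have hQsum : (𝒞₀.map (fun C => C.image π)).sum = Tb := himg_sum 𝒞₀
      -- key inequality 1 + ℬ.card ≤ Tb'.card
      have hbad' : ∀ B ∈ ℬ, ∃ x ∈ B, x ∉ L := by
        intro B hB
        have := hbad B hB
        push_neg at this
        exact this
      have hmain : 1 + ℬ.card ≤ Tb'.card := by
        by_cases hC : C ∈ ℬ
        · set ℬ' := ℬ.erase C with hℬ'def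
          have hℬ'le : ℬ' ≤ 𝒞₀ := by
            have := Multiset.erase_le_erase C hle
            simpa [Multiset.erase_cons_head] using this
          have h1ℬ : 1 ≤ ℬ.card := Multiset.card_pos.mpr (fun h => by simp [h] at hC)
          have hℬ'card : ℬ.card = ℬ'.card + 1 := by
            rw [hℬ'def, Multiset.card_erase_of_mem hC]
            exact (Nat.succ_pred_eq_of_pos h1ℬ).symm
          have hIH := IH Q (𝒞₀.map (fun C => C.image π)) (ℬ'.map (fun C => C.image π))
            (by simpa using h𝒞₀card) h0Q
            (Multiset.map_le_map hℬ'le) ?_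
          swap
          · intro D hD
            obtain ⟨B, hB, rfl⟩ := Multiset.mem_map.mp hD
            obtain ⟨x, hx, hxL⟩ := hbad' B (Multiset.mem_of_le (Multiset.erase_le C ℬ) hB)
            intro hall
            have := hall (π x) (Finset.mem_image_of_mem π hx)
            rw [hQsum, hstabTb, AddSubgroup.mem_bot] at this
            exact hxL ((QuotientAddGroup.eq_zero_iff x).mp this)
          rw [hQsum, hstabTb, AddSubgroup.card_bot, one_mul, Multiset.card_map] at hIH
          -- strict growth : Tb ⊊ Tb'
          have hsubset : Tb ⊆ Tb' := by
            rw [hTb']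
            intro x hx
            have h0C : (0:Q) ∈ C.image π := by
              have h0π : π (0:G) = 0 := rfl
              exact h0π ▸ Finset.mem_image_of_mem π (h0 C (Multiset.mem_cons_self _ _))
            have := Finset.add_mem_add h0C hx
            simpa using this
          have hne' : Tb ≠ Tb' := by
            intro hEqT
            obtain ⟨x, hx, hxL⟩ := hbad' C hC
            have hπx : π x ∈ C.image π := Finset.mem_image_of_mem π hx
            have hπx0 : π x ≠ 0 := fun h => hxL ((QuotientAddGroup.eq_zero_iff x).mp h)
            have hmem : π x ∈ AddAction.stabilizer Q Tb' := by
              rw [AddAction.mem_stabilizer_iff]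
              apply Finset.eq_of_subset_of_card_le
              · intro y hy
                obtain ⟨t, ht, rfl⟩ := Finset.mem_vadd_finset.mp hy
                rw [← hEqT] at ht
                have : π x + t ∈ C.image π + Tb := Finset.add_mem_add hπx ht
                rw [← hTb'] at this
                simpa [vadd_eq_add] using this
              · rw [Finset.card_vadd_finset]
            rw [hstabTb', AddSubgroup.mem_bot] at hmem
            exact hπx0 hmem
          have hlt : Tb.card < Tb'.card :=
            Finset.card_lt_card (ssubset_of_subset_of_ne hsubset hne')
          omega
        · have hℬle₀ : ℬ ≤ 𝒞₀ := le_of_le_cons_of_not_mem hle hC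
          have hIH := IH Q (𝒞₀.map (fun C => C.image π)) (ℬ.map (fun C => C.image π))
            (by simpa using h𝒞₀card) h0Q
            (Multiset.map_le_map hℬle₀) ?_
          swap
          · intro D hD
            obtain ⟨B, hB, rfl⟩ := Multiset.mem_map.mp hD
            obtain ⟨x, hx, hxL⟩ := hbad' B hB
            intro hall
            have := hall (π x) (Finset.mem_image_of_mem π hx)
            rw [hQsum, hstabTb, AddSubgroup.mem_bot] at this
            exact hxL ((QuotientAddGroup.eq_zero_iff x).mp this)
          rw [hQsum, hstabTb, AddSubgroup.card_bot, one_mul, Multiset.card_map] at hIH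
          have hsubset : Tb ⊆ Tb' := by
            rw [hTb']
            intro x hx
            have h0C : (0:Q) ∈ C.image π := by
              have h0π : π (0:G) = 0 := rfl
              exact h0π ▸ Finset.mem_image_of_mem π (h0 C (Multiset.mem_cons_self _ _))
            have := Finset.add_mem_add h0C hx
            simpa using this
          have := Finset.card_le_card hsubset
          omega
      -- fiber count
      have hfiber : T'.card = Nat.card L * Tb'.card := by
        rw [hTb'def]
        exact card_eq_card_quot_mul L T' (fun g hg => stab_vadd_eq (hLdef ▸ hg))
      calc Nat.card L * (1 + ℬ.card) ≤ Nat.card L * Tb'.card :=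
            Nat.mul_le_mul_left _ hmain
      _ = T'.card := hfiber.symm

section Main
variable {G : Type u} [AddCommGroup G] [Fintype G] [DecidableEq G]

lemma card_mul_relindex {H K : AddSubgroup G} (h : H ≤ K) :
    Nat.card H * H.relIndex K = Nat.card K := by
  have h1 := AddSubgroup.card_mul_index (H.addSubgroupOf K)
  rwa [Nat.card_congr (AddSubgroup.addSubgroupOfEquivOfLe h).toEquiv] at h1

lemma min_bound_arith {r r1 e a b A : ℕ} (h1 : r1 + e = r) (h2 : e + 2 ≤ b)
    (hab : a + b ≤ a * b + 1) (hb2 : b ≤ a * b) (hqr : 2 * (a * b) ≤ r + 1)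
    (hmin : min r1 (r1 - a + 2) ≤ A) : min r (r - a * b + 2) ≤ A := by
  have hdisj := min_le_iff.mp hmin
  refine le_trans (min_le_right _ _) ?_
  have key : ∀ q : ℕ, a + b ≤ q + 1 → b ≤ q → 2 * q ≤ r + 1 → r - q + 2 ≤ A := by
    intro q hq1 hq2 hq3
    rcases hdisj with h | h <;> omega
  exact key (a * b) hab hb2 hqr

lemma add_le_mul_succ {a b : ℕ} (ha : 1 ≤ a) (hb : 1 ≤ b) : a + b ≤ a * b + 1 := by
  obtain ⟨x, rfl⟩ := Nat.exists_eq_add_of_le ha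
  obtain ⟨y, rfl⟩ := Nat.exists_eq_add_of_le hb
  have : (1 + x) * (1 + y) = 1 + x + y + x * y := by ring
  rw [this]
  omega

theorem key_aux : ∀ (n : ℕ) (K : AddSubgroup G), Nat.card K ≤ n → K ≠ ⊥ →
    ∀ (𝒜 : Multiset (Finset G)),
    (∀ B ∈ 𝒜, 2 ≤ B.card) →
    (∀ B ∈ 𝒜, ∃ c : G, (B : Set G) ⊆ c +ᵥ (K : Set G)) →
    Nat.card K - 1 ≤ 𝒜.card →
    ∃ H : AddSubgroup G, H ≠ ⊥ ∧ H ≤ K ∧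
      ∃ 𝒜' ≤ 𝒜, ∃ 𝒜'' ≤ 𝒜',
        𝒜''.card = Nat.card H - 1 ∧
        min 𝒜.card (𝒜.card - H.relIndex K + 2) ≤ 𝒜'.card ∧
        (𝒜''.sum).card = Nat.card H ∧
        ∀ B ∈ 𝒜', ∃ c : G, (B : Set G) ⊆ c +ᵥ (H : Set G) := by
  intro n
  induction n with
  | zero =>
    intro K hK0 _ _ _ _ _
    have := Nat.card_pos (α := K)
    omega
  | succ n IH =>
    intro K hKn hKbot 𝒜 hcard hcoset hr
    classical
    have hK1 : 1 ≤ Nat.card K := Nat.card_pos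
    -- translation into K
    set pick : Finset G → G := fun B => if h : B.Nonempty then h.choose else 0 with hpickdef
    have hpick : ∀ B : Finset G, B.Nonempty → pick B ∈ B := by
      intro B h
      rw [hpickdef]
      simp only [dif_pos h]
      exact h.choose_spec
    set f : Finset G → Finset G := fun B => (-(pick B)) +ᵥ B with hfdef
    have hBne : ∀ B ∈ 𝒜, B.Nonempty := fun B hB => Finset.card_pos.mp (by have := hcard B hB; omega)
    have h0f : ∀ B ∈ 𝒜, (0:G) ∈ f B := by
      intro B hB
      have : -(pick B) + pick B ∈ -(pick B) +ᵥ B := Finset.vadd_mem_vadd_finset (hpick B (hBne B hB))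
      simpa using this
    have hcardf : ∀ B : Finset G, (f B).card = B.card := fun B => Finset.card_vadd_finset _ _
    have hfK : ∀ B ∈ 𝒜, ∀ x ∈ f B, x ∈ K := by
      intro B hB x hx
      obtain ⟨c, hc⟩ := hcoset B hB
      obtain ⟨b, hb, rfl⟩ := Finset.mem_vadd_finset.mp hx
      obtain ⟨k₁, hk₁, hk₁'⟩ := hc hb
      obtain ⟨k₂, hk₂, hk₂'⟩ := hc (hpick B (hBne B hB))
      have : -(pick B) +ᵥ b = k₁ - k₂ := by
        rw [← hk₁', ← hk₂']
        simp [vadd_eq_add]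
        abel
      rw [this]
      exact K.sub_mem hk₁ hk₂
    set S : Finset G := ((𝒜.map f).sum) with hSdef
    have h0S : (0:G) ∈ S := by
      apply zero_mem_msum
      intro C hC
      obtain ⟨B, hB, rfl⟩ := Multiset.mem_map.mp hC
      exact h0f B hB
    have hSK : ∀ x ∈ S, x ∈ K := by
      apply msum_mem_subgroup
      intro C hC
      obtain ⟨B, hB, rfl⟩ := Multiset.mem_map.mp hC
      exact hfK B hB
    have hKfcard : (K : Set G).toFinset.card = Nat.card K := by
      rw [Set.toFinset_card, Nat.card_eq_fintype_card]
      rfl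
    have hSle : S.card ≤ Nat.card K := by
      rw [← hKfcard]
      apply Finset.card_le_card
      intro x hx
      rw [Set.mem_toFinset]
      exact hSK x hx
    -- the sum of any translated subfamily has same card as original subfamily's sum
    have htranslate : ∀ ℳ : Multiset (Finset G), ((ℳ.map f).sum).card = (ℳ.sum).card := by
      intro ℳ
      have : (ℳ.map f).sum = (ℳ.map (fun B => -(pick B))).sum +ᵥ ℳ.sum := by
        rw [hfdef]
        exact msum_map_vadd ℳ _
      rw [this, Finset.card_vadd_finset]
    rcases lt_or_eq_of_le hSle with hcase | hcase
    · -- Case B : proper sum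
      set H : AddSubgroup G := AddAction.stabilizer G S with hHdef
      have hHvadd : ∀ g ∈ H, g +ᵥ S = S := fun g hg => stab_vadd_eq (hHdef ▸ hg)
      have hHK : H ≤ K := by
        intro g hg
        have h1 : g + 0 ∈ g +ᵥ S := Finset.vadd_mem_vadd_finset h0S
        rw [hHvadd g hg] at h1
        exact hSK g (by simpa using h1)
      set m : ℕ := Nat.card H with hmdef
      set b : ℕ := H.relIndex K with hbdef
      have hmb : m * b = Nat.card K := card_mul_relindex hHK
      have hm1 : 1 ≤ m := Nat.card_pos
      have hb1 : 1 ≤ b := by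
        rcases Nat.eq_zero_or_pos b with h | h
        · rw [h, mul_zero] at hmb; omega
        · exact h
      -- fiber count for S
      have hfiber : S.card = m * (S.image (QuotientAddGroup.mk : G → G ⧸ H)).card :=
        card_eq_card_quot_mul H S hHvadd
      set i : ℕ := (S.image (QuotientAddGroup.mk : G → G ⧸ H)).card with hidef
      have hi1 : 1 ≤ i := by
        rw [hidef]
        refine Finset.card_pos.mpr ⟨QuotientAddGroup.mk 0, Finset.mem_image_of_mem _ h0S⟩
      have hib : i < b := by
        by_contra h
        push_neg at h
        have : m * b ≤ m * i := Nat.mul_le_mul_left m h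
        omega
      have hmbm : m * (b - 1) = m * b - m := by
        obtain ⟨b', hb'⟩ := Nat.exists_eq_add_of_le hb1
        rw [hb', Nat.add_sub_cancel_left, Nat.mul_add, Nat.mul_one, Nat.add_sub_cancel_left]
      have hScard_le : S.card ≤ m * b - m := by
        have h1 : i ≤ b - 1 := by omega
        have h2 : m * i ≤ m * (b - 1) := Nat.mul_le_mul_left m h1
        omega
      -- bad family
      set P : Finset G → Prop := fun B => ∀ x ∈ f B, x ∈ H with hPdef
      set ℬ : Multiset (Finset G) := (𝒜.filter (fun B => ¬ P B)).map f with hℬdef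
      have hℬle : ℬ ≤ 𝒜.map f := Multiset.map_le_map (Multiset.filter_le _ _)
      have hℬbad : ∀ C ∈ ℬ, ¬ ∀ x ∈ C, x ∈ AddAction.stabilizer G ((𝒜.map f).sum) := by
        intro C hC
        obtain ⟨B, hB, rfl⟩ := Multiset.mem_map.mp hC
        have := (Multiset.mem_filter.mp hB).2
        intro hall
        exact this (fun x hx => by
          have := hall x hx
          rw [← hSdef] at this
          exact hHdef ▸ this)
      have hwk := weak_kneser ((𝒜.map f).card) G (𝒜.map f) ℬ le_rfl
        (by intro C hC; obtain ⟨B, hB, rfl⟩ := Multiset.mem_map.mp hC; exact h0f B hB)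
        hℬle hℬbad
      rw [← hSdef] at hwk
      rw [show AddAction.stabilizer G S = H from hHdef.symm, ← hmdef] at hwk
      set e : ℕ := ℬ.card with hedef
      have hebound : e + 2 ≤ b := by
        have h1 : m * (1 + e) ≤ m * b - m := le_trans hwk hScard_le
        rw [← hmbm] at h1
        have h2 : 1 + e ≤ b - 1 := Nat.le_of_mul_le_mul_left h1 (by omega)
        omega
      -- H is nontrivial
      have hHbot : H ≠ ⊥ := by
        intro hbot
        have hfilt : 𝒜.filter (fun B => ¬ P B) = 𝒜 := by
          rw [Multiset.filter_eq_self]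
          intro B hB
          intro hP
          obtain ⟨x, hx, y, hy, hxy⟩ := Finset.one_lt_card.mp (by rw [hcardf]; exact hcard B hB)
          have hxH := hP x hx
          have hyH := hP y hy
          rw [hbot, AddSubgroup.mem_bot] at hxH hyH
          exact hxy (hxH.trans hyH.symm)
        have hm1' : m = 1 := by rw [hmdef, hbot]; simp
        have he : e = 𝒜.card := by rw [hedef, hℬdef, hfilt, Multiset.card_map]
        have hS1 : 1 + 𝒜.card ≤ S.card := by
          rw [← he]
          have h' := hwk
          rw [hm1', one_mul] at h'
          exact h'
        omega
      -- H is proper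
      have hHlt : Nat.card H < Nat.card K := by
        have h2 : m * 2 ≤ m * b := Nat.mul_le_mul_left m (by omega)
        rw [hmb] at h2
        rw [← hmdef]
        omega
      have hHn : Nat.card H ≤ n := by omega
      -- good family
      set 𝒜₁ : Multiset (Finset G) := 𝒜.filter P with h𝒜₁def
      have hcount : 𝒜₁.card + e = 𝒜.card := by
        rw [h𝒜₁def, hedef, hℬdef, Multiset.card_map]
        rw [← Multiset.card_add, Multiset.filter_add_not P 𝒜]
      have hcoset₁ : ∀ B ∈ 𝒜₁, ∃ c : G, (B : Set G) ⊆ c +ᵥ (H : Set G) := by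
        intro B hB
        obtain ⟨hB𝒜, hBP⟩ := Multiset.mem_filter.mp hB
        refine ⟨pick B, ?_⟩
        intro x hx
        have hmem : -(pick B) + x ∈ f B := Finset.vadd_mem_vadd_finset hx
        have hH := hBP _ hmem
        exact ⟨-(pick B) + x, hH, by simp [vadd_eq_add]⟩
      have hcard₁ : ∀ B ∈ 𝒜₁, 2 ≤ B.card := fun B hB => hcard B (Multiset.mem_of_le (Multiset.filter_le _ _) hB)
      have hr₁ : Nat.card H - 1 ≤ 𝒜₁.card := by
        have hmbK : m + b ≤ m * b + 1 := add_le_mul_succ hm1 hb1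
        have hge : Nat.card K - 1 ≤ 𝒜.card := hr
        rw [← hmdef]
        omega
      obtain ⟨H', hH'bot, hH'H, 𝒜', h𝒜'le, 𝒜'', h𝒜''le, hc'', hmin, hsum'', hcos'⟩ :=
        IH H hHn hHbot 𝒜₁ hcard₁ hcoset₁ hr₁
      refine ⟨H', hH'bot, hH'H.trans hHK, 𝒜', h𝒜'le.trans (Multiset.filter_le _ _), 𝒜'',
        h𝒜''le, hc'', ?_, hsum'', hcos'⟩
      -- the min bound
      set a : ℕ := H'.relIndex H with hadef
      have hrel : a * b = H'.relIndex K := AddSubgroup.relIndex_mul_relIndex _ _ _ hH'H hHK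
      have ha1 : 1 ≤ a := by
        have := card_mul_relindex hH'H
        rcases Nat.eq_zero_or_pos a with h | h
        · rw [← hadef] at this; rw [h, mul_zero] at this; omega
        · exact h
      have hq1 : a + b ≤ a * b + 1 := add_le_mul_succ ha1 hb1
      have hq2 : b ≤ a * b := Nat.le_mul_of_pos_left b ha1
      have hH'2 : 2 ≤ Nat.card H' := (AddSubgroup.one_lt_card_iff_ne_bot H').mpr hH'bot
      have hcardH'q : Nat.card H' * H'.relIndex K = Nat.card K :=
        card_mul_relindex (hH'H.trans hHK)
      have hq3 : 2 * (a * b) ≤ 𝒜.card + 1 := by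
        rw [hrel]
        have h5 : 2 * H'.relIndex K ≤ Nat.card H' * H'.relIndex K :=
          Nat.mul_le_mul_right _ hH'2
        omega
      rw [← hrel]
      exact min_bound_arith hcount hebound hq1 hq2 hq3 hmin
    · -- Case A : full sum, take H = K
      obtain ⟨𝒜₀, hle₀, hsum₀, hc₀⟩ := greedy f 𝒜 h0f
      rw [← hSdef] at hsum₀ hc₀
      have hk₀ : 𝒜₀.card ≤ Nat.card K - 1 := by omega
      have hsubcard : Nat.card K - 1 - 𝒜₀.card ≤ (𝒜 - 𝒜₀).card := by
        rw [Multiset.card_sub hle₀]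
        omega
      obtain ⟨N, hNle, hNcard⟩ := exists_le_card (𝒜 - 𝒜₀) _ hsubcard
      have hN𝒜 : N ≤ 𝒜 := hNle.trans (Multiset.sub_le_self _ _)
      set 𝒜'' : Multiset (Finset G) := 𝒜₀ + N with h𝒜''def
      have h𝒜''le : 𝒜'' ≤ 𝒜 := by
        calc 𝒜₀ + N ≤ 𝒜₀ + (𝒜 - 𝒜₀) := add_le_add_right hNle _
        _ = 𝒜 := by rw [add_comm]; exact tsub_add_cancel_of_le hle₀
      have h𝒜''card : 𝒜''.card = Nat.card K - 1 := by
        rw [h𝒜''def, Multiset.card_add, hNcard]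
        omega
      -- sum of 𝒜'' is everything
      set X : Finset G := (N.map f).sum with hXdef
      have h0X : (0:G) ∈ X := by
        apply zero_mem_msum
        intro C hC
        obtain ⟨B, hB, rfl⟩ := Multiset.mem_map.mp hC
        exact h0f B (Multiset.mem_of_le hN𝒜 hB)
      have hXK : ∀ x ∈ X, x ∈ K := by
        apply msum_mem_subgroup
        intro C hC
        obtain ⟨B, hB, rfl⟩ := Multiset.mem_map.mp hC
        exact hfK B (Multiset.mem_of_le hN𝒜 hB)
      have hsum'' : ((𝒜''.map f).sum) = S + X := by
        rw [h𝒜''def, Multiset.map_add, Multiset.sum_add, hsum₀]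
      have hSsubSX : S ⊆ S + X := by
        intro x hx
        have := Finset.add_mem_add hx h0X
        simpa using this
      have hSXK : ∀ x ∈ S + X, x ∈ K := by
        intro x hx
        obtain ⟨y, hy, z, hz, rfl⟩ := Finset.mem_add.mp hx
        exact K.add_mem (hSK y hy) (hXK z hz)
      have hSXcard : (S + X).card = Nat.card K := by
        apply le_antisymm
        · rw [← hKfcard]
          apply Finset.card_le_card
          intro x hx
          rw [Set.mem_toFinset]
          exact hSXK x hx
        · rw [← hcase]
          exact Finset.card_le_card hSsubSX
      refine ⟨K, hKbot, le_rfl, 𝒜, le_rfl, 𝒜'', h𝒜''le, h𝒜''card, ?_, ?_, hcoset⟩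
      · rw [AddSubgroup.relIndex_self]
        exact min_le_left _ _
      · rw [← htranslate 𝒜'', hsum'', hSXcard]

end Main

/-- Key lemma on setpartitions whose sets lie in `K`-cosets. -/
theorem key_lemma (G : Type*) [AddCommGroup G] [Fintype G] [DecidableEq G]
    (K : AddSubgroup G) (hK : K ≠ ⊥)
    (𝒜 : Multiset (Finset G))
    (hcard : ∀ B ∈ 𝒜, 2 ≤ B.card)
    (hcoset : ∀ B ∈ 𝒜, ∃ c : G, (B : Set G) ⊆ c +ᵥ (K : Set G))
    (hr : Nat.card K - 1 ≤ 𝒜.card) :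
    ∃ H : AddSubgroup G, H ≠ ⊥ ∧ H ≤ K ∧
      ∃ 𝒜' ≤ 𝒜, ∃ 𝒜'' ≤ 𝒜',
        𝒜''.card = Nat.card H - 1 ∧
        min 𝒜.card (𝒜.card - H.relIndex K + 2) ≤ 𝒜'.card ∧
        (𝒜''.sum).card = Nat.card H ∧
        ∀ B ∈ 𝒜', ∃ c : G, (B : Set G) ⊆ c +ᵥ (H : Set G) := by
  exact key_aux (Nat.card K) K le_rfl hK 𝒜 hcard hcoset hr
end

section
/- Let G be a finite abelian group, K ≤ G a subgroup, and 𝒜 = A_1⋯A_r a setpartition over G such that the sumset A_1 + ⋯ + A_r equals a full coset of K (i.e., |A_1 + ⋯ + A_r| = |K| and each A_i is contained in a single K-coset with |A_i| ≥ 2). If r ≥ |K| − 1, then there is a sub-setpartition of length exactly |K| − 1 whose sumset still has cardinality |K|. -/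
open scoped Pointwise

private lemma lemA {G : Type*} [AddCommGroup G] [DecidableEq G]
    (𝒜 : Multiset (Finset G)) (hne : ∀ B ∈ 𝒜, B.Nonempty) :
    (∃ B ∈ 𝒜, ∃ g : G, 𝒜.sum = {g} + (𝒜.erase B).sum) ∨
      𝒜.card + 1 ≤ 𝒜.sum.card := by
  induction 𝒜 using Multiset.induction with
  | empty => right; simp
  | cons A t ih =>
    have hA : A.Nonempty := hne A (Multiset.mem_cons_self _ _)
    obtain ⟨B, hB, g, hg⟩ | h := ih (fun B hB => hne B (Multiset.mem_cons_of_mem hB))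
    · left
      refine ⟨B, Multiset.mem_cons_of_mem hB, g, ?_⟩
      have herase : (A ::ₘ t).erase B = A ::ₘ t.erase B := by
        by_cases hAB : B = A
        · subst hAB
          rw [Multiset.erase_cons_head, Multiset.cons_erase hB]
        · rw [Multiset.erase_cons_tail _ (Ne.symm hAB)]
      rw [herase, Multiset.sum_cons, Multiset.sum_cons, hg, add_left_comm]
    · by_cases hstep : t.sum.card + 1 ≤ (A ::ₘ t).sum.card
      · right
        rw [Multiset.card_cons]
        omega
      · left
        obtain ⟨a, ha⟩ := hA
        refine ⟨A, Multiset.mem_cons_self _ _, a, ?_⟩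
        rw [Multiset.erase_cons_head, Multiset.sum_cons]
        rw [Multiset.sum_cons] at hstep
        have hsub : ({a} : Finset G) + t.sum ⊆ A + t.sum :=
          Finset.add_subset_add_right (Finset.singleton_subset_iff.mpr ha)
        have hcards : (({a} : Finset G) + t.sum).card = t.sum.card := by
          rw [Finset.singleton_add]
          exact Finset.card_image_of_injective _ (add_right_injective a)
        exact (Finset.eq_of_subset_of_card_le hsub (by omega)).symm

/-- Greedy fact: if the sumset of `r ≥ |K| − 1` sets, each of size `≥ 2` and
contained in a single `K`-coset, covers a full `K`-coset, then already
`|K| − 1` of the sets have sumset of cardinality `|K|`. -/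
theorem greedy_sub_setpartition (G : Type*) [AddCommGroup G] [Fintype G]
    [DecidableEq G] (K : AddSubgroup G)
    (𝒜 : Multiset (Finset G))
    (hcard : ∀ B ∈ 𝒜, 2 ≤ B.card)
    (hcoset : ∀ B ∈ 𝒜, ∃ c : G, (B : Set G) ⊆ c +ᵥ (K : Set G))
    (hfull : (𝒜.sum).card = Nat.card K)
    (hr : Nat.card K - 1 ≤ 𝒜.card) :
    ∃ ℬ ≤ 𝒜, ℬ.card = Nat.card K - 1 ∧ (ℬ.sum).card = Nat.card K := by
  classical
  clear hcoset
  have hne : ∀ B ∈ 𝒜, B.Nonempty := fun B hB =>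
    Finset.card_pos.mp (by have := hcard B hB; omega)
  clear hcard
  obtain ⟨n, hn⟩ : ∃ n, 𝒜.card = n := ⟨_, rfl⟩
  induction n using Nat.strong_induction_on generalizing 𝒜 with
  | _ n ih =>
    rcases eq_or_lt_of_le hr with heq | hlt
    · exact ⟨𝒜, le_rfl, heq.symm, hfull⟩
    · obtain ⟨B, hB, g, hg⟩ | h := lemA 𝒜 hne
      · have hcarderase : (𝒜.erase B).card = 𝒜.card - 1 := Multiset.card_erase_of_mem hB
        have hpos : 0 < 𝒜.card := Multiset.card_pos_iff_exists_mem.mpr ⟨B, hB⟩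
        have hsum' : ((𝒜.erase B).sum).card = Nat.card K := by
          rw [hg] at hfull
          simpa using hfull
        obtain ⟨ℬ, hle, h1, h2⟩ := ih (n - 1) (by omega) (𝒜.erase B)
          hsum' (by omega) (fun C hC => hne C (Multiset.mem_of_mem_erase hC)) (by omega)
        exact ⟨ℬ, hle.trans (Multiset.erase_le B 𝒜), h1, h2⟩
      · omega
end
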